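/- In the two-player weighted game with w_min < α ≤ 1/2 and w_max = 1 - w_min > 1/2, the expected social loss at the mixed equilibrium equals p₁·p₂ = (α - w_min)·(w_max - α)/(1 - 2·w_min)², where p₁ = (w_max - α)/(1 - 2·w_min) and p₂ = (α - w_min)/(1 - 2·w_min). Specifically, α·p₁·p₂ + (1-α)·(1-p₁)·(1-p₂) = p₁·p₂. -/

import Mathlib

theorem expected_social_loss_formula (α wmin wmax : ℝ)
    (hw0 : 0 < wmin) (hw : wmin < 1 / 2) (hmax : wmax = 1 - wmin)
    (hαw : wmin < α) (hα1 : α ≤ 1 / 2) :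
    let p₁ := (wmax - α) / (1 - 2 * wmin)
    let p₂ := (α - wmin) / (1 - 2 * wmin)
    α * p₁ * p₂ + (1 - α) * (1 - p₁) * (1 - p₂) = p₁ * p₂ ∧
    p₁ * p₂ = (α - wmin) * (wmax - α) / (1 - 2 * wmin) ^ 2 := by
  have hd : 1 - 2 * wmin ≠ 0 := by linarith
  subst hmax
  have hd' : 1 - wmin * 2 ≠ 0 := by linarith
  constructor <;> field_simp <;> ring
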